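/- (Rényi variational bound.) Let p : Z → ℝ satisfy p(z) > 0 for every z ∈ Z, and interpret p(z) as the joint mass p(x, z) for a fixed observation x, so that the evidence is p(x) = Σ_z p(z). Then for every real β ≥ 1: Σ_z q(z)·log(p(z)/q(z)) ≤ log(Σ_z p(z)) ≤ (1/β)·log( Σ_z q(z)·(p(z)/q(z))^β ). That is, the evidence lower bound (ELBO) and the β-Rényi evidence upper bound sandwich the log-evidence. -/
import Mathlib


/-- **Rényi variational bound (Lemma 1).**
For a strictly positive pmf `q` and a positive joint mass `p` on a nonempty finite
type `Z`, the ELBO and the `β`-Rényi evidence upper bound sandwich the log-evidence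
`log (∑ z, p z)` for every `β ≥ 1`. -/
theorem renyi_variational_bound {Z : Type*} [Fintype Z] [Nonempty Z]
    (q : Z → ℝ) (hq_nonneg : ∀ z, 0 ≤ q z) (hq_pos : ∀ z, 0 < q z)
    (hq_sum : ∑ z, q z = 1)
    (p : Z → ℝ) (hp : ∀ z, 0 < p z)
    {β : ℝ} (hβ : 1 ≤ β) :
    (∑ z, q z * Real.log (p z / q z)) ≤ Real.log (∑ z, p z) ∧
      Real.log (∑ z, p z) ≤ (1 / β) * Real.log (∑ z, q z * (p z / q z) ^ β) := by
  have hqp : ∀ z, 0 < p z / q z := fun z => div_pos (hp z) (hq_pos z)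
  have hkey : ∀ z : Z, q z * (p z / q z) = p z := fun z =>
    mul_div_cancel₀ (p z) (hq_pos z).ne'
  have hsum : (∑ z, q z * (p z / q z)) = ∑ z, p z := by
    simp only [hkey]
  have hβ0 : 0 < β := lt_of_lt_of_le one_pos hβ
  have hSpos : 0 < ∑ z, p z :=
    Finset.sum_pos (fun z _ => hp z) Finset.univ_nonempty
  constructor
  · -- ELBO : concave Jensen for log
    have := (strictConcaveOn_log_Ioi.concaveOn).le_map_sum
      (t := Finset.univ) (w := q) (p := fun z => p z / q z)
      (fun i _ => hq_nonneg i) hq_sum (fun i _ => hqp i)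
    simpa [smul_eq_mul, hsum] using this
  · -- Rényi upper bound : convex Jensen for rpow
    have hJ := (convexOn_rpow hβ).map_sum_le
      (t := Finset.univ) (w := q) (p := fun z => p z / q z)
      (fun i _ => hq_nonneg i) hq_sum (fun i _ => (hqp i).le)
    simp only [smul_eq_mul, hsum] at hJ
    have hS2 : 0 < ∑ z, q z * (p z / q z) ^ β :=
      Finset.sum_pos (fun z _ => mul_pos (hq_pos z)
        (Real.rpow_pos_of_pos (hqp z) β)) Finset.univ_nonempty
    have hlog := Real.log_le_log (Real.rpow_pos_of_pos hSpos β) hJ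
    rw [Real.log_rpow hSpos] at hlog
    rw [div_mul_eq_mul_div, le_div_iff₀ hβ0]
    linarith [hlog]
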